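/- For every λ > 0 and every ν > 1, the Conway–Maxwell–Poisson distribution CMP(λ, ν) is not infinitely divisible. -/

import Mathlib

open MeasureTheory

/-- The Conway–Maxwell–Poisson distribution `CMP(λ, ν)`, viewed as a measure on `ℝ`
supported on the nonnegative integers: `P(X = k) = (1/Z(λ,ν)) · λ^k/(k!)^ν`. -/
noncomputable def cmpMeasure (lam nu : ℝ) : Measure ℝ :=
  Measure.sum fun k : ℕ =>
    ENNReal.ofReal ((lam ^ k / (k.factorial : ℝ) ^ nu) /
        ∑' j : ℕ, lam ^ j / (j.factorial : ℝ) ^ nu) • Measure.dirac (k : ℝ)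

/-- The `n`-fold convolution of a measure on `ℝ`: the pushforward of the `n`-fold
product measure under summation of coordinates. -/
noncomputable def nfoldConv (n : ℕ) (μ : Measure ℝ) : Measure ℝ :=
  Measure.map (fun x : Fin n → ℝ => ∑ i, x i) (Measure.pi fun _ : Fin n => μ)

/-- A measure `μ` on `ℝ` is infinitely divisible if for every positive integer `n`
there is a probability measure whose `n`-fold convolution equals `μ`. -/
def InfinitelyDivisible (μ : Measure ℝ) : Prop :=
  ∀ n : ℕ, 0 < n → ∃ ν : Measure ℝ, IsProbabilityMeasure ν ∧ nfoldConv n ν = μ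

open Set ENNReal

section aux
variable {lam nu : ℝ}

lemma cmp_f_pos (hlam : 0 < lam) (j : ℕ) :
    0 < lam ^ j / (j.factorial : ℝ) ^ nu :=
  div_pos (pow_pos hlam j) (Real.rpow_pos_of_pos (by exact_mod_cast j.factorial_pos) nu)

lemma cmp_f_summable (hlam : 0 < lam) (hnu : 1 ≤ nu) :
    Summable (fun j : ℕ => lam ^ j / (j.factorial : ℝ) ^ nu) := by
  refine Summable.of_nonneg_of_le (fun j => (cmp_f_pos hlam j).le) (fun j => ?_)
    (Real.summable_pow_div_factorial lam)
  have h1 : (1 : ℝ) ≤ (j.factorial : ℝ) := by exact_mod_cast j.factorial_pos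
  have : (j.factorial : ℝ) ^ (1 : ℝ) ≤ (j.factorial : ℝ) ^ nu :=
    Real.rpow_le_rpow_of_exponent_le h1 hnu
  rw [Real.rpow_one] at this
  exact div_le_div_of_nonneg_left (pow_pos hlam j).le
    (by exact_mod_cast j.factorial_pos) this

lemma cmp_Z_pos (hlam : 0 < lam) (hnu : 1 ≤ nu) :
    0 < ∑' j : ℕ, lam ^ j / (j.factorial : ℝ) ^ nu :=
  Summable.tsum_pos (cmp_f_summable hlam hnu) (fun j => (cmp_f_pos hlam j).le) 0 (cmp_f_pos hlam 0)

lemma cmp_singleton (lam nu : ℝ) (j : ℕ) :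
    cmpMeasure lam nu {(j : ℝ)} =
      ENNReal.ofReal ((lam ^ j / (j.factorial : ℝ) ^ nu) /
        ∑' i : ℕ, lam ^ i / (i.factorial : ℝ) ^ nu) := by
  rw [cmpMeasure, Measure.sum_apply _ (measurableSet_singleton _)]
  have : ∀ k : ℕ,
      (ENNReal.ofReal ((lam ^ k / (k.factorial : ℝ) ^ nu) /
        ∑' i : ℕ, lam ^ i / (i.factorial : ℝ) ^ nu) • Measure.dirac (k : ℝ)) {(j : ℝ)} =
      if k = j then ENNReal.ofReal ((lam ^ j / (j.factorial : ℝ) ^ nu) /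
        ∑' i : ℕ, lam ^ i / (i.factorial : ℝ) ^ nu) else 0 := by
    intro k
    rw [Measure.smul_apply, smul_eq_mul,
      Measure.dirac_apply' _ (measurableSet_singleton _)]
    by_cases hk : k = j
    · subst hk; simp
    · have : ((k : ℝ)) ∉ ({(j : ℝ)} : Set ℝ) := by
        simp [Nat.cast_injective.ne hk]
      simp [indicator_of_notMem this, hk]
  simp_rw [this]
  exact tsum_ite_eq j _

lemma cmp_null (lam nu : ℝ) {s : Set ℝ} (hs : MeasurableSet s)
    (h : ∀ k : ℕ, (k : ℝ) ∉ s) : cmpMeasure lam nu s = 0 := by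
  rw [cmpMeasure, Measure.sum_apply _ hs]
  refine Summable.tsum_eq_zero_iff ENNReal.summable |>.2 fun k => ?_
  rw [Measure.smul_apply, smul_eq_mul, Measure.dirac_apply' _ hs,
    indicator_of_notMem (h k), mul_zero]

end aux


section comb

lemma fin_sum_nat_eq_one {n : ℕ} {k : Fin n → ℕ} (h : ∑ i, k i = 1) :
    ∃ i, k i = 1 ∧ ∀ j, j ≠ i → k j = 0 := by
  have hne : ∃ i, k i ≠ 0 := by
    by_contra hc
    push_neg at hc
    simp [hc] at h
  obtain ⟨i, hi⟩ := hne
  have hle : k i ≤ 1 := h ▸ Finset.single_le_sum (fun j _ => Nat.zero_le _) (Finset.mem_univ i)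
  have hki : k i = 1 := by omega
  refine ⟨i, hki, fun j hj => ?_⟩
  have hsum : k i + ∑ t ∈ Finset.univ.erase i, k t = 1 := by
    rw [Finset.add_sum_erase _ _ (Finset.mem_univ i)]; exact h
  have h0 : ∑ t ∈ Finset.univ.erase i, k t = 0 := by omega
  exact (Finset.sum_eq_zero_iff.1 h0) j (Finset.mem_erase.2 ⟨hj, Finset.mem_univ j⟩)

@[to_additive]
lemma prod_ite_single' {M : Type*} [CommMonoid M] {n : ℕ} (i : Fin n) (u v : M) :
    ∏ t, (if t = i then u else v) = u * v ^ (n - 1) := by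
  rw [← Finset.mul_prod_erase Finset.univ _ (Finset.mem_univ i), if_pos rfl]
  congr 1
  rw [Finset.prod_congr rfl (fun t ht => if_neg (Finset.mem_erase.1 ht).1),
    Finset.prod_const, Finset.card_erase_of_mem (Finset.mem_univ i),
    Finset.card_univ, Fintype.card_fin]

@[to_additive]
lemma prod_ite_pair' {M : Type*} [CommMonoid M] {n : ℕ} {i j : Fin n} (hij : i ≠ j)
    (u v : M) : ∏ t, (if t = i ∨ t = j then u else v) = u ^ 2 * v ^ (n - 2) := by
  have hjmem : j ∈ Finset.univ.erase i := Finset.mem_erase.2 ⟨hij.symm, Finset.mem_univ j⟩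
  rw [← Finset.mul_prod_erase Finset.univ _ (Finset.mem_univ i), if_pos (Or.inl rfl),
    ← Finset.mul_prod_erase _ _ hjmem, if_pos (Or.inr rfl)]
  have : ∏ t ∈ (Finset.univ.erase i).erase j, (if t = i ∨ t = j then u else v)
      = v ^ (n - 2) := by
    rw [Finset.prod_congr rfl (fun t ht => ?_), Finset.prod_const,
      Finset.card_erase_of_mem hjmem, Finset.card_erase_of_mem (Finset.mem_univ i),
      Finset.card_univ, Fintype.card_fin]
    · rfl
    · have h' := Finset.mem_erase.1 ht
      have h'' := Finset.mem_erase.1 h'.2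
      exact if_neg (by tauto)
  rw [this, ← mul_assoc, sq]

end comb

set_option maxHeartbeats 2000000 in
/-- For every `λ > 0` and every `ν > 1`, the Conway–Maxwell–Poisson distribution
`CMP(λ, ν)` is not infinitely divisible. -/
theorem cmp_not_infinitelyDivisible_of_one_lt (lam nu : ℝ)
    (hlam : 0 < lam) (hnu : 1 < nu) :
    ¬ InfinitelyDivisible (cmpMeasure lam nu) := by
  intro hID
  set Z : ℝ := ∑' j : ℕ, lam ^ j / (j.factorial : ℝ) ^ nu with hZdef
  have hZpos : 0 < Z := cmp_Z_pos hlam hnu.le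
  set c : ℝ := (2 : ℝ) ^ nu with hcdef
  have hc2 : 2 < c := by
    calc (2 : ℝ) = 2 ^ (1 : ℝ) := (Real.rpow_one 2).symm
    _ < 2 ^ nu := Real.rpow_lt_rpow_of_exponent_lt one_lt_two hnu
  obtain ⟨m, hm⟩ := exists_nat_gt ((4 - c) / (c - 2))
  set n : ℕ := m + 2 with hndef
  haveI hnonempty : Nonempty (Fin n) := ⟨⟨0, by omega⟩⟩
  obtain ⟨ρ, hρ, hconv⟩ := hID n (by omega)
  haveI := hρ
  set g : (Fin n → ℝ) → ℝ := fun x => ∑ i, x i with hgdef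
  have hgm : Measurable g := Finset.measurable_sum _ (fun i _ => measurable_pi_apply i)
  set π : Measure (Fin n → ℝ) := Measure.pi (fun _ : Fin n => ρ) with hπdef
  have hμ : ∀ s : Set ℝ, MeasurableSet s → cmpMeasure lam nu s = π (g ⁻¹' s) := by
    intro s hs
    rw [← hconv, nfoldConv, Measure.map_apply hgm hs]
  have hpi : ∀ S : Fin n → Set ℝ, π (univ.pi S) = ∏ i, ρ (S i) :=
    fun S => Measure.pi_pi _ _
  have hpat1 : ∀ (i : Fin n) (S T : Set ℝ),
      π (univ.pi fun t => if t = i then S else T) = ρ S * ρ T ^ (n - 1) := by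
    intro i S T
    rw [hpi]
    simp_rw [apply_ite ρ]
    exact prod_ite_single' i _ _
  have hpat2 : ∀ (i j : Fin n) (_ : i ≠ j) (S T : Set ℝ),
      π (univ.pi fun t => if t = i ∨ t = j then S else T) = ρ S ^ 2 * ρ T ^ (n - 2) := by
    intro i j hij S T
    rw [hpi]
    simp_rw [apply_ite ρ]
    exact prod_ite_pair' hij _ _
  have hcoord : ∀ (i : Fin n) (S : Set ℝ), ρ S = 0 → π {x | x i ∈ S} = 0 := by
    intro i S hS
    have hset : {x : Fin n → ℝ | x i ∈ S} = univ.pi (fun t => if t = i then S else univ) := by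
      ext x
      simp only [mem_setOf_eq, mem_univ_pi]
      constructor
      · intro h t
        by_cases ht : t = i
        · subst ht; simpa using h
        · simp [ht]
      · intro h
        have := h i
        simpa using this
    rw [hset, hpat1, hS, zero_mul]
  -- values of the CMP measure
  have hval0 : cmpMeasure lam nu {(0 : ℝ)} = ENNReal.ofReal (1 / Z) := by
    have h := cmp_singleton lam nu 0
    norm_num at h
    rw [← hZdef] at h
    rw [one_div]
    exact h
  have hval1 : cmpMeasure lam nu {(1 : ℝ)} = ENNReal.ofReal (lam / Z) := by
    have h := cmp_singleton lam nu 1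
    norm_num at h
    rw [← hZdef] at h
    exact h
  have hval2 : cmpMeasure lam nu {(2 : ℝ)} = ENNReal.ofReal (lam ^ 2 / c / Z) := by
    have h := cmp_singleton lam nu 2
    norm_num [Nat.factorial] at h
    rw [← hZdef, ← hcdef] at h
    exact h
  have hμ0 : π (g ⁻¹' {(0 : ℝ)}) = ENNReal.ofReal (1 / Z) := by
    rw [← hμ _ (measurableSet_singleton _), hval0]
  have hμ1 : π (g ⁻¹' {(1 : ℝ)}) = ENNReal.ofReal (lam / Z) := by
    rw [← hμ _ (measurableSet_singleton _), hval1]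
  have hμ2 : π (g ⁻¹' {(2 : ℝ)}) = ENNReal.ofReal (lam ^ 2 / c / Z) := by
    rw [← hμ _ (measurableSet_singleton _), hval2]
  -- no negative mass
  have hI0 : ρ (Iio 0) = 0 := by
    have hμI : π (g ⁻¹' Iio 0) = 0 := by
      rw [← hμ _ measurableSet_Iio]
      exact cmp_null lam nu measurableSet_Iio (fun k => by simp [not_lt])
    have hsub : univ.pi (fun _ : Fin n => Iio 0) ⊆ g ⁻¹' Iio 0 := by
      intro x hx
      have hlt : ∀ i ∈ Finset.univ, x i < (fun _ : Fin n => (0:ℝ)) i :=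
        fun i _ => by simpa using hx i (mem_univ i)
      have := Finset.sum_lt_sum_of_nonempty Finset.univ_nonempty hlt
      simpa using this
    have hpow : ρ (Iio 0) ^ n = 0 := by
      have h1 := (measure_mono hsub).trans_eq hμI
      rw [hpi, Finset.prod_const, Finset.card_univ, Fintype.card_fin] at h1
      exact le_antisymm h1 (zero_le)
    exact pow_eq_zero_iff (by omega) |>.1 hpow
  set a0 : ℝ≥0∞ := ρ {(0 : ℝ)} with ha0def
  set a1 : ℝ≥0∞ := ρ {(1 : ℝ)} with ha1def
  have hallzero : π (univ.pi fun _ : Fin n => ({0} : Set ℝ)) = a0 ^ n := by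
    rw [hpi, Finset.prod_const, Finset.card_univ, Fintype.card_fin]
  -- p0 lower bound
  have hp0low : a0 ^ n ≤ π (g ⁻¹' {(0 : ℝ)}) := by
    rw [← hallzero]
    refine measure_mono fun x hx => ?_
    have hz : ∀ i, x i = 0 := fun i => by simpa using hx i (mem_univ i)
    simp [hgdef, hz]
  -- p0 upper bound and a0 ≠ 0
  have hbadneg : π (⋃ i, {x | x i ∈ Iio 0}) = 0 :=
    measure_iUnion_null fun i => hcoord i _ hI0
  have hp0up : π (g ⁻¹' {(0 : ℝ)}) ≤ a0 ^ n := by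
    have hsub : g ⁻¹' {(0 : ℝ)} ⊆
        univ.pi (fun _ : Fin n => ({0} : Set ℝ)) ∪ ⋃ i, {x | x i ∈ Iio 0} := by
      intro x hx
      by_cases hnn : ∀ i, 0 ≤ x i
      · left
        intro i _
        have h0 : ∑ j, x j = 0 := hx
        simpa using (Finset.sum_eq_zero_iff_of_nonneg (fun j _ => hnn j)).1 h0 i
          (Finset.mem_univ i)
      · right
        push_neg at hnn
        obtain ⟨i, hi⟩ := hnn
        exact mem_iUnion.2 ⟨i, hi⟩
    calc π (g ⁻¹' {(0 : ℝ)}) ≤ _ := measure_mono hsub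
    _ ≤ π (univ.pi fun _ : Fin n => ({0} : Set ℝ)) + π (⋃ i, {x | x i ∈ Iio 0}) :=
        measure_union_le _ _
    _ = a0 ^ n := by rw [hbadneg, add_zero, hallzero]
  have ha0ne : a0 ≠ 0 := by
    intro h
    have h1 : π (g ⁻¹' {(0 : ℝ)}) = 0 := le_antisymm (by simpa [h, pow_eq_zero_iff] using hp0up) (zero_le)
    rw [hμ0] at h1
    exact absurd h1 (ENNReal.ofReal_pos.2 (by positivity)).ne'
  -- support in the naturals
  set B : Set ℝ := Set.range ((↑) : ℕ → ℝ) with hBdef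
  have hBmeas : MeasurableSet B := (Set.countable_range _).measurableSet
  set A : Set ℝ := Bᶜ ∩ Ici 0 with hAdef
  have hAmeas : MeasurableSet A := hBmeas.compl.inter measurableSet_Ici
  have hμA : π (g ⁻¹' A) = 0 := by
    rw [← hμ _ hAmeas]
    exact cmp_null lam nu hAmeas (fun k hk => hk.1 (mem_range_self k))
  obtain ⟨i0⟩ := hnonempty
  have hνA : ρ A = 0 := by
    have hsub : univ.pi (fun t => if t = i0 then A else ({0} : Set ℝ)) ⊆ g ⁻¹' A := by
      intro x hx
      have hx0 : x i0 ∈ A := by simpa using hx i0 (mem_univ i0)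
      have hrest : ∀ t ∈ Finset.univ, t ≠ i0 → x t = 0 := fun t _ ht => by
        simpa [ht] using hx t (mem_univ t)
      have hsum : g x = x i0 := Finset.sum_eq_single_of_mem i0 (Finset.mem_univ i0) hrest
      simpa [mem_preimage, hsum] using hx0
    have h1 := (measure_mono hsub).trans_eq hμA
    rw [hpat1] at h1
    have h2 := le_antisymm h1 (zero_le)
    rcases mul_eq_zero.1 h2 with h | h
    · exact h
    · exact absurd (pow_eq_zero_iff (by omega) |>.1 h) ha0ne
  have hνBc : ρ Bᶜ = 0 := by
    have hsub : Bᶜ ⊆ Iio 0 ∪ A := by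
      intro x hx
      by_cases h0 : 0 ≤ x
      · exact Or.inr ⟨hx, h0⟩
      · exact Or.inl (lt_of_not_ge h0)
    refine le_antisymm ((measure_mono hsub).trans ?_) (zero_le)
    calc ρ (Iio 0 ∪ A) ≤ ρ (Iio 0) + ρ A := measure_union_le _ _
    _ = 0 := by rw [hI0, hνA, add_zero]
  have hbadB : π (⋃ i, {x | x i ∈ Bᶜ}) = 0 :=
    measure_iUnion_null fun i => hcoord i _ hνBc
  -- p1 upper bound
  have hp1up : π (g ⁻¹' {(1 : ℝ)}) ≤ (n : ℝ≥0∞) * (a1 * a0 ^ (n - 1)) := by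
    have hsub : g ⁻¹' {(1 : ℝ)} ⊆
        (⋃ i, univ.pi fun t => if t = i then ({1} : Set ℝ) else {0}) ∪
          ⋃ i, {x | x i ∈ Bᶜ} := by
      intro x hx
      by_cases hall : ∀ i, x i ∈ B
      · left
        choose k hk using hall
        have hxs : ∑ i, x i = 1 := hx
        have hcast : ((∑ i, k i : ℕ) : ℝ) = ((1 : ℕ) : ℝ) := by
          push_cast
          rw [Finset.sum_congr rfl (fun i _ => hk i)]
          simpa using hxs
        obtain ⟨i, hi1, hi0⟩ := fin_sum_nat_eq_one (Nat.cast_injective hcast)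
        refine mem_iUnion.2 ⟨i, ?_⟩
        intro t _
        by_cases ht : t = i
        · subst ht
          simp [← hk t, hi1]
        · simp [ht, ← hk t, hi0 t ht]
      · right
        push_neg at hall
        obtain ⟨i, hi⟩ := hall
        exact mem_iUnion.2 ⟨i, hi⟩
    calc π (g ⁻¹' {(1 : ℝ)}) ≤
        π ((⋃ i, univ.pi fun t => if t = i then ({1} : Set ℝ) else {0}) ∪
          ⋃ i, {x | x i ∈ Bᶜ}) := measure_mono hsub
    _ ≤ π (⋃ i, univ.pi fun t => if t = i then ({1} : Set ℝ) else {0}) +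
          π (⋃ i, {x | x i ∈ Bᶜ}) := measure_union_le _ _
    _ = π (⋃ i, univ.pi fun t => if t = i then ({1} : Set ℝ) else {0}) := by
        rw [hbadB, add_zero]
    _ ≤ ∑' i : Fin n, π (univ.pi fun t => if t = i then ({1} : Set ℝ) else {0}) :=
        measure_iUnion_le _
    _ = ∑ i : Fin n, (a1 * a0 ^ (n - 1)) := by
        rw [tsum_fintype]
        exact Finset.sum_congr rfl fun i _ => hpat1 i _ _
    _ = (n : ℝ≥0∞) * (a1 * a0 ^ (n - 1)) := by
        rw [Finset.sum_const, Finset.card_univ, Fintype.card_fin, nsmul_eq_mul]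
  -- p2 lower bound
  set s2 : Finset ((_ : Fin n) × Fin n) := Finset.univ.sigma (fun i : Fin n => Finset.Iio i)
    with hs2def
  set F : ((_ : Fin n) × Fin n) → Set (Fin n → ℝ) := fun p =>
    univ.pi fun t => if t = p.1 ∨ t = p.2 then ({1} : Set ℝ) else {0} with hFdef
  have hmemchar : ∀ p (x : Fin n → ℝ), x ∈ F p →
      ∀ t, x t = if t = p.1 ∨ t = p.2 then 1 else 0 := by
    intro p x hx t
    have h := hx t (mem_univ t)
    simp only at h
    by_cases hco : t = p.1 ∨ t = p.2
    · rw [if_pos hco]; rw [if_pos hco] at h; simpa using h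
    · rw [if_neg hco]; rw [if_neg hco] at h; simpa using h
  have hmem_s2 : ∀ p ∈ s2, p.2 < p.1 := fun p hp => (Finset.mem_sigma.1 hp).2 |> Finset.mem_Iio.1
  have hFdisj : (↑s2 : Set ((_ : Fin n) × Fin n)).PairwiseDisjoint F := by
    intro p hp q hq hpq
    have hplt := hmem_s2 p (by exact_mod_cast hp)
    have hqlt := hmem_s2 q (by exact_mod_cast hq)
    rw [Function.onFun, Set.disjoint_left]
    intro x hxp hxq
    have hcp := hmemchar p x hxp
    have hcq := hmemchar q x hxq
    have hiff : ∀ t : Fin n, (t = p.1 ∨ t = p.2) ↔ (t = q.1 ∨ t = q.2) := by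
      intro t
      have := (hcp t).symm.trans (hcq t)
      constructor <;> intro h
      · rw [if_pos h] at this
        by_contra h2
        rw [if_neg h2] at this
        exact one_ne_zero this
      · rw [if_pos h] at this
        by_contra h2
        rw [if_neg h2] at this
        exact one_ne_zero this.symm
    have e1 : p.1.val = q.1.val ∨ p.1.val = q.2.val :=
      ((hiff p.1).1 (Or.inl rfl)).imp (congrArg Fin.val) (congrArg Fin.val)
    have e2 : p.2.val = q.1.val ∨ p.2.val = q.2.val :=
      ((hiff p.2).1 (Or.inr rfl)).imp (congrArg Fin.val) (congrArg Fin.val)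
    have e3 : q.1.val = p.1.val ∨ q.1.val = p.2.val :=
      ((hiff q.1).2 (Or.inl rfl)).imp (congrArg Fin.val) (congrArg Fin.val)
    have e4 : q.2.val = p.1.val ∨ q.2.val = p.2.val :=
      ((hiff q.2).2 (Or.inr rfl)).imp (congrArg Fin.val) (congrArg Fin.val)
    have hplt' : p.2.val < p.1.val := hplt
    have hqlt' : q.2.val < q.1.val := hqlt
    apply hpq
    have hfst : p.1 = q.1 := Fin.ext (by omega)
    have hsnd : p.2 = q.2 := Fin.ext (by omega)
    exact Sigma.ext hfst (heq_of_eq hsnd)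
  have hFmeas : ∀ p ∈ s2, MeasurableSet (F p) := fun p _ =>
    MeasurableSet.univ_pi fun t => by
      split <;> exact measurableSet_singleton _
  have hsub2 : ⋃ p ∈ s2, F p ⊆ g ⁻¹' {(2 : ℝ)} := by
    intro x hx
    obtain ⟨p, hp, hxp⟩ := mem_iUnion₂.1 hx
    have hc := hmemchar p x hxp
    have hne : p.1 ≠ p.2 := (hmem_s2 p hp).ne'
    have : g x = 2 := by
      rw [hgdef]
      simp only
      rw [Finset.sum_congr rfl (fun t _ => hc t), sum_ite_pair' hne (1 : ℝ) 0]
      simp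
    simp [mem_preimage, this]
  have hcard2 : s2.card * 2 = n * (n - 1) := by
    rw [hs2def, Finset.card_sigma]
    simp only [Fin.card_Iio]
    rw [show (∑ x : Fin n, (x : ℕ)) = ∑ i ∈ Finset.range n, i from
      Fin.sum_univ_eq_sum_range (fun i => i) n]
    exact Finset.sum_range_id_mul_two n
  have hp2low : (s2.card : ℝ≥0∞) * (a1 ^ 2 * a0 ^ (n - 2)) ≤ π (g ⁻¹' {(2 : ℝ)}) := by
    calc (s2.card : ℝ≥0∞) * (a1 ^ 2 * a0 ^ (n - 2))
        = ∑ p ∈ s2, π (F p) := by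
          rw [Finset.sum_congr rfl (fun p hp => hpat2 p.1 p.2 (hmem_s2 p hp).ne' _ _),
            Finset.sum_const, nsmul_eq_mul]
    _ = π (⋃ p ∈ s2, F p) := (measure_biUnion_finset hFdisj hFmeas).symm
    _ ≤ π (g ⁻¹' {(2 : ℝ)}) := measure_mono hsub2
  -- combine
  have he1 : n - 1 = m + 1 := by omega
  have he2 : n - 2 = m := by omega
  have hcard2' : s2.card * 2 = (m + 2) * (m + 1) := by rw [hcard2, hndef]; norm_num
  have hncast : (n : ℝ≥0∞) = (m : ℝ≥0∞) + 2 := by rw [hndef]; push_cast; ring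
  rw [he1, hncast] at hp1up
  rw [he2] at hp2low
  have hp0low' : a0 ^ (m + 2) ≤ π (g ⁻¹' {(0 : ℝ)}) :=
    (by rw [hndef] : a0 ^ (m + 2) = a0 ^ n).trans_le hp0low
  have hkey : ((m : ℝ≥0∞) + 1) * π (g ⁻¹' {(1 : ℝ)}) ^ 2 ≤
      2 * ((m : ℝ≥0∞) + 2) * (π (g ⁻¹' {(2 : ℝ)}) * π (g ⁻¹' {(0 : ℝ)})) := by
    calc ((m : ℝ≥0∞) + 1) * π (g ⁻¹' {(1 : ℝ)}) ^ 2
        ≤ ((m : ℝ≥0∞) + 1) * (((m : ℝ≥0∞) + 2) * (a1 * a0 ^ (m + 1))) ^ 2 := by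
          gcongr
    _ = 2 * ((m : ℝ≥0∞) + 2) * (((s2.card : ℝ≥0∞) * (a1 ^ 2 * a0 ^ m)) * a0 ^ (m + 2)) := by
          have hcast : ((m : ℝ≥0∞) + 2) * ((m : ℝ≥0∞) + 1) = 2 * (s2.card : ℝ≥0∞) := by
            have h2 : (((m + 2) * (m + 1) : ℕ) : ℝ≥0∞) = ((s2.card * 2 : ℕ) : ℝ≥0∞) :=
              congrArg Nat.cast hcard2'.symm
            push_cast at h2
            rw [h2, mul_comm]
          calc ((m : ℝ≥0∞) + 1) * (((m : ℝ≥0∞) + 2) * (a1 * a0 ^ (m + 1))) ^ 2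
              = ((m : ℝ≥0∞) + 2) * (((m : ℝ≥0∞) + 2) * ((m : ℝ≥0∞) + 1)) *
                ((a1 ^ 2 * a0 ^ m) * a0 ^ (m + 2)) := by ring
          _ = ((m : ℝ≥0∞) + 2) * (2 * (s2.card : ℝ≥0∞)) *
                ((a1 ^ 2 * a0 ^ m) * a0 ^ (m + 2)) := by rw [hcast]
          _ = 2 * ((m : ℝ≥0∞) + 2) * (((s2.card : ℝ≥0∞) * (a1 ^ 2 * a0 ^ m)) * a0 ^ (m + 2)) := by
                ring
    _ ≤ 2 * ((m : ℝ≥0∞) + 2) * (π (g ⁻¹' {(2 : ℝ)}) * π (g ⁻¹' {(0 : ℝ)})) := by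
          gcongr
  rw [hμ0, hμ1, hμ2] at hkey
  -- translate to the reals
  have hlz : 0 ≤ lam / Z := by positivity
  have h1z : 0 ≤ (1 : ℝ) / Z := by positivity
  have h2z : 0 ≤ lam ^ 2 / c / Z := by positivity
  have hreal : ((m : ℝ) + 1) * (lam / Z) ^ 2 ≤
      2 * ((m : ℝ) + 2) * (lam ^ 2 / c / Z * (1 / Z)) := by
    have hm1 : ((m : ℝ≥0∞) + 1) = ENNReal.ofReal ((m : ℝ) + 1) := by
      rw [ENNReal.ofReal_add (Nat.cast_nonneg m) zero_le_one]; simp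
    have hm2 : 2 * ((m : ℝ≥0∞) + 2) = ENNReal.ofReal (2 * ((m : ℝ) + 2)) := by
      rw [ENNReal.ofReal_mul (by norm_num), ENNReal.ofReal_add (Nat.cast_nonneg m) (by norm_num)]
      simp
    rw [hm1, hm2, ← ENNReal.ofReal_pow hlz, ← ENNReal.ofReal_mul h2z,
      ← ENNReal.ofReal_mul (by positivity), ← ENNReal.ofReal_mul (by positivity)] at hkey
    exact (ENNReal.ofReal_le_ofReal_iff (by positivity)).1 hkey
  have hZne : Z ≠ 0 := hZpos.ne'
  have hcne : c ≠ 0 := by linarith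
  have hlamne : lam ≠ 0 := hlam.ne'
  have hfinal : ((m : ℝ) + 1) * c ≤ 2 * ((m : ℝ) + 2) := by
    have h := hreal
    field_simp at h
    exact h
  have hm' : (4 - c) < (m : ℝ) * (c - 2) := by
    rwa [div_lt_iff₀ (by linarith)] at hm
  nlinarith [hm', hfinal]
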